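/- Let $B$ be a group, $H \leq B$, and $V = \mathrm{Ind}_H^B(\mathbb{Z}) = \mathbb{Z}[B/H]$. Then the first cohomology group $H^1(B, V)$ is torsion-free as an abelian group: if $f: B \to V$ is a derivation and $z f$ is a principal derivation for some nonzero integer $z$, then $f$ is a principal derivation. -/

import Mathlib

open Finsupp SemidirectProduct

/-- The permutation action of `b : B` on the free `A`-module `X →₀ A` on a `B`-set `X`. -/
def permAct {B : Type*} [Group B] {X : Type*} [MulAction B X] {A : Type*} [AddCommGroup A]
    (b : B) : (X →₀ A) ≃+ (X →₀ A) :=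
  Finsupp.domCongr (MulAction.toPerm b)

lemma permAct_apply {B : Type*} [Group B] {X : Type*} [MulAction B X] {A : Type*}
    [AddCommGroup A] (b : B) (f : X →₀ A) (x : X) : permAct b f x = f (b⁻¹ • x) := by
  simp [permAct, Finsupp.domCongr, Finsupp.equivMapDomain, MulAction.toPerm]


/-- `H¹(B, ℤ[B/H])` is torsion-free: a derivation with a nonzero integer multiple principal
is itself principal. -/
theorem statement_18 (B : Type*) [Group B] (H : Subgroup B)
    (f : B → ((B ⧸ H) →₀ ℤ))
    (hf : ∀ b₁ b₂ : B, f (b₁ * b₂) = f b₁ + permAct b₁ (f b₂))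
    (z : ℤ) (hz : z ≠ 0)
    (hprin : ∃ m : (B ⧸ H) →₀ ℤ, ∀ b : B, z • f b = m - permAct b m) :
    ∃ m : (B ⧸ H) →₀ ℤ, ∀ b : B, f b = m - permAct b m := by
  obtain ⟨m, hm⟩ := hprin
  have key : ∀ (b : B) (x : B ⧸ H), z * f b x = m x - m (b⁻¹ • x) := by
    intro b x
    have h := DFunLike.congr_fun (hm b) x
    simpa [permAct_apply] using h
  set c : ℤ := m (QuotientGroup.mk (1 : B)) with hc
  have hdiv : ∀ x : B ⧸ H, z ∣ m x - c := by
    intro x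
    obtain ⟨b, rfl⟩ := QuotientGroup.mk_surjective x
    refine ⟨f b (QuotientGroup.mk b), ?_⟩
    have h := key b (QuotientGroup.mk b)
    have hb : b⁻¹ • (QuotientGroup.mk b : B ⧸ H) = QuotientGroup.mk (1 : B) := by
      rw [MulAction.Quotient.smul_mk, smul_eq_mul, inv_mul_cancel]
    rw [hb] at h
    omega
  cases finite_or_infinite (B ⧸ H) with
  | inl hfin =>
    haveI := hfin
    refine ⟨Finsupp.equivFunOnFinite.symm (fun x => (m x - c) / z), fun b => ?_⟩
    ext x
    obtain ⟨k, hk⟩ := hdiv x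
    obtain ⟨l, hl⟩ := hdiv (b⁻¹ • x)
    have h := key b x
    have hfb : f b x = k - l := by
      have : z * f b x = z * (k - l) := by rw [h]; ring_nf; omega
      exact mul_left_cancel₀ hz this
    simp only [Finsupp.sub_apply, permAct_apply, Finsupp.coe_equivFunOnFinite_symm,
      hk, hl, Int.mul_ediv_cancel_left _ hz, hfb]
  | inr hinf =>
    haveI := hinf
    have hcz : z ∣ c := by
      obtain ⟨x, hx⟩ := m.support.exists_notMem
      have h0 : m x = 0 := Finsupp.notMem_support_iff.mp hx
      have := hdiv x
      rw [h0, zero_sub] at this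
      exact dvd_neg.mp this
    have hmx : ∀ x, z ∣ m x := fun x => by
      have := dvd_add (hdiv x) hcz
      simpa using this
    refine ⟨Finsupp.mapRange (· / z) (Int.zero_ediv z) m, fun b => ?_⟩
    ext x
    obtain ⟨k, hk⟩ := hmx x
    obtain ⟨l, hl⟩ := hmx (b⁻¹ • x)
    have h := key b x
    have hfb : f b x = k - l := by
      have : z * f b x = z * (k - l) := by rw [h]; ring_nf; omega
      exact mul_left_cancel₀ hz this
    simp only [Finsupp.sub_apply, permAct_apply, Finsupp.mapRange_apply,
      hk, hl, Int.mul_ediv_cancel_left _ hz, hfb]
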